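/- Let f be a unit of A such that the polynomial X^p − f is irreducible over Frac(A); let L := Frac(A)[X]/(X^p − f), let B be the integral closure of A in L, and assume that B/πB is an integral domain. If the image of f in A/πA is a p-th power in A/πA, then there exist a unit g of A, an integer n with 0 < n ≤ v_K(λ), and h ∈ A such that f = g^p · (1 + π^{pn} h), and moreover either n = v_K(λ), or the image of h in A/πA is not a p-th power in A/πA. (This is the additive/étale normal form in the classification of the reduction of μ_p-torsors: the torsor extends to a torsor under the group scheme H_n.) -/

import Mathlib

open Polynomial Finset

lemma aux_isUnit_of_mk {A : Type*} [CommRing A] {I : Ideal A}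
    (hI : I ≤ Ideal.jacobson ⊥) {a : A}
    (h : IsUnit (Ideal.Quotient.mk I a)) : IsUnit a := by
  obtain ⟨b, hb⟩ := Ideal.Quotient.mk_surjective (↑h.unit⁻¹ : A ⧸ I)
  have hmem : a * b - 1 ∈ I := by
    rw [← Ideal.Quotient.eq_zero_iff_mem, map_sub, map_mul, hb, map_one,
      h.mul_val_inv, sub_self]
  have h2 := Ideal.mem_jacobson_bot.mp (hI hmem) 1
  rw [mul_one, sub_add_cancel] at h2
  exact isUnit_of_mul_isUnit_left h2

lemma aux_one_add_pow {B : Type*} [CommRing B] (c : B) {p : ℕ} (hp : p ≠ 0) :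
    (1 + c) ^ p = 1 + ∑ k ∈ Finset.range p, c ^ (k + 1) * ((p.choose (k + 1) : ℕ) : B) := by
  obtain ⟨n, rfl⟩ := Nat.exists_eq_succ_of_ne_zero hp
  rw [add_comm (1 : B) c, add_pow, Finset.sum_range_succ']
  simp only [one_pow, mul_one, pow_zero, Nat.choose_zero_right, Nat.cast_one, one_mul]
  rw [add_comm]

lemma aux_choose_dvd {A : Type*} [CommRing A] {πA : A} {e p k : ℕ} (hp : p.Prime)
    (hpd : πA ^ e ∣ (p : A)) (hk : k ≠ 0) (hk2 : k < p) : πA ^ e ∣ ((p.choose k : ℕ) : A) := by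
  obtain ⟨c, hc⟩ := hp.dvd_choose_self hk hk2
  rw [hc]; push_cast; exact hpd.mul_right _

lemma aux_term_dvd {A : Type*} [CommRing A] (πA : A) {p vlam j k : ℕ} (hp : p.Prime)
    (hpd : πA ^ ((p - 1) * vlam) ∣ (p : A)) (hjv : j + 1 ≤ vlam) (hk : k + 1 < p) (w : A) :
    πA ^ (j * p + 1) ∣ πA ^ (j * (k + 1)) * w * ((p.choose (k + 1) : ℕ) : A) := by
  have h1 : πA ^ ((p - 1) * vlam) ∣ ((p.choose (k + 1) : ℕ) : A) :=
    aux_choose_dvd hp hpd (Nat.succ_ne_zero k) hk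
  have h2 : πA ^ (j * (k + 1) + (p - 1) * vlam) ∣
      πA ^ (j * (k + 1)) * w * ((p.choose (k + 1) : ℕ) : A) := by
    rw [pow_add]; exact mul_dvd_mul (dvd_mul_right _ w) h1
  refine dvd_trans (pow_dvd_pow πA ?_) h2
  obtain ⟨P, rfl⟩ := Nat.exists_eq_succ_of_ne_zero hp.ne_zero
  have hP : 1 ≤ P := by have := hp.two_le; omega
  simp only [Nat.succ_sub_one]
  nlinarith [Nat.mul_le_mul_left P hjv]

lemma outer_normal_form {p : ℕ} (hp : p.Prime)
    {A : Type*} [CommRing A] [IsDomain A] [UniqueFactorizationMonoid A]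
    (πA : A) (hπA : Prime πA) (hjac : Ideal.span {πA} ≤ Ideal.jacobson ⊥)
    {vlam : ℕ} (hv1 : 1 ≤ vlam) (hpd : πA ^ ((p - 1) * vlam) ∣ (p : A))
    (f : A)
    (key : ∀ g h : A, ∀ m : ℕ, IsUnit g → ¬ πA ∣ h → 1 ≤ m → ¬ p ∣ m → m < p * vlam →
      f = g ^ p * (1 + πA ^ m * h) → False) :
    ∀ (fuel : ℕ) (g h : A) (m : ℕ), IsUnit g → ¬ πA ∣ h → 1 ≤ m → p * vlam ≤ m + fuel →
      f = g ^ p * (1 + πA ^ m * h) →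
      ∃ (g' h' : A) (n : ℕ), IsUnit g' ∧ 0 < n ∧ n ≤ vlam ∧
        f = g' ^ p * (1 + πA ^ (p * n) * h') ∧
        (n = vlam ∨ ¬ ∃ c : A ⧸ Ideal.span {πA},
          c ^ p = Ideal.Quotient.mk (Ideal.span {πA}) h') := by
  have fin : ∀ (g h : A) (m : ℕ), IsUnit g → p * vlam ≤ m →
      f = g ^ p * (1 + πA ^ m * h) →
      ∃ (g' h' : A) (n : ℕ), IsUnit g' ∧ 0 < n ∧ n ≤ vlam ∧
        f = g' ^ p * (1 + πA ^ (p * n) * h') ∧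
        (n = vlam ∨ ¬ ∃ c : A ⧸ Ideal.span {πA},
          c ^ p = Ideal.Quotient.mk (Ideal.span {πA}) h') := by
    intro g h m hg hle hfeq
    refine ⟨g, πA ^ (m - p * vlam) * h, vlam, hg, hv1, le_refl _, ?_, Or.inl rfl⟩
    have hm' : πA ^ m = πA ^ (p * vlam) * πA ^ (m - p * vlam) := by
      rw [← pow_add, Nat.add_sub_cancel' hle]
    rw [hfeq, hm']; ring
  intro fuel
  induction fuel with
  | zero =>
    intro g h m hg hh hm1 hfuel hfeq
    exact fin g h m hg (by simpa using hfuel) hfeq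
  | succ fuel ih =>
    intro g h m hg hh hm1 hfuel hfeq
    by_cases hbig : p * vlam ≤ m
    · exact fin g h m hg hbig hfeq
    push_neg at hbig
    by_cases hpm : p ∣ m
    swap
    · exact absurd hfeq (key g h m hg hh hm1 hpm hbig)
    obtain ⟨n, hn⟩ := hpm
    have hm : m = n * p := by rw [hn, Nat.mul_comm]
    have hn1 : 1 ≤ n := by
      rcases Nat.eq_zero_or_pos n with h0 | h0
      · rw [h0, Nat.mul_zero] at hn; omega
      · exact h0
    have hnv : n < vlam := by
      by_contra hcon
      push_neg at hcon
      have h13 : p * vlam ≤ m := by rw [hn]; exact Nat.mul_le_mul_left p hcon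
      linarith
    by_cases hpow : ∃ c : A ⧸ Ideal.span {πA},
        c ^ p = Ideal.Quotient.mk (Ideal.span {πA}) h
    swap
    · exact ⟨g, h, n, hg, hn1, le_of_lt hnv, by rw [hfeq, hn], Or.inr hpow⟩
    obtain ⟨c, hc⟩ := hpow
    obtain ⟨a, ha⟩ := Ideal.Quotient.mk_surjective c
    have hdvd1 : πA ∣ h - a ^ p := by
      rw [← Ideal.mem_span_singleton, ← Ideal.Quotient.eq_zero_iff_mem, map_sub, map_pow, ha,
        hc, sub_self]
    obtain ⟨t, ht⟩ := hdvd1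
    have hht : h = a ^ p + πA * t := by rw [← ht]; ring
    have hD := aux_one_add_pow (πA ^ n * a) hp.ne_zero
    obtain ⟨P, hP⟩ : ∃ P, p = P + 1 := Nat.exists_eq_succ_of_ne_zero hp.ne_zero
    have hrg : Finset.range p = Finset.range (P + 1) := by rw [hP]
    rw [hrg, Finset.sum_range_succ] at hD
    have hch : ((p.choose (P + 1) : ℕ) : A) = 1 := by
      rw [← hP, hP, Nat.choose_self, Nat.cast_one]
    rw [hch, mul_one] at hD
    have hlastterm : (πA ^ n * a) ^ (P + 1) = πA ^ (n * p) * a ^ p := by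
      rw [← hP, mul_pow, ← pow_mul]
    rw [hlastterm] at hD
    have hmid : πA ^ (n * p + 1) ∣
        ∑ k ∈ Finset.range P, (πA ^ n * a) ^ (k + 1) * ((p.choose (k + 1) : ℕ) : A) := by
      refine Finset.dvd_sum fun k hk => ?_
      have hterm : (πA ^ n * a) ^ (k + 1) * ((p.choose (k + 1) : ℕ) : A) =
          πA ^ (n * (k + 1)) * a ^ (k + 1) * ((p.choose (k + 1) : ℕ) : A) := by
        rw [mul_pow, ← pow_mul]
      rw [hterm]
      exact aux_term_dvd πA hp hpd hnv (by simp at hk; omega) _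
    obtain ⟨s, hs⟩ := hmid
    rw [hs] at hD
    have hDmk : Ideal.Quotient.mk (Ideal.span {πA}) ((1 + πA ^ n * a) ^ p) = 1 := by
      rw [hD]
      have hπ0 : Ideal.Quotient.mk (Ideal.span {πA}) πA = 0 :=
        Ideal.Quotient.eq_zero_iff_mem.mpr (Ideal.subset_span rfl)
      rw [map_add, map_add, map_mul, map_mul, map_pow, map_pow, hπ0, map_one]
      rw [zero_pow (Nat.succ_ne_zero _), zero_pow (Nat.mul_ne_zero (by omega) hp.ne_zero)]
      ring
    have hDu : IsUnit ((1 + πA ^ n * a) ^ p) :=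
      aux_isUnit_of_mk hjac (by rw [hDmk]; exact isUnit_one)
    have hD1u : IsUnit (1 + πA ^ n * a) :=
      isUnit_of_dvd_unit (dvd_pow_self _ hp.ne_zero) hDu
    set E : A := ↑hDu.unit⁻¹ with hE
    have hDE : (1 + πA ^ n * a) ^ p * E = 1 := hDu.mul_val_inv
    set e0 : A := E * (t - s) with he0
    have h11 : (1 + πA ^ n * a) ^ p * (1 + πA ^ (n * p + 1) * e0) =
        (1 + πA ^ n * a) ^ p + πA ^ (n * p + 1) * (t - s) := by
      calc (1 + πA ^ n * a) ^ p * (1 + πA ^ (n * p + 1) * e0)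
          = (1 + πA ^ n * a) ^ p +
            πA ^ (n * p + 1) * ((t - s) * ((1 + πA ^ n * a) ^ p * E)) := by
            rw [he0]; ring
        _ = (1 + πA ^ n * a) ^ p + πA ^ (n * p + 1) * (t - s) := by rw [hDE]; ring
    have hfeq2 : f = (g * (1 + πA ^ n * a)) ^ p * (1 + πA ^ (n * p + 1) * e0) := by
      calc f = g ^ p * (1 + πA ^ (n * p) * h) := by rw [hfeq, hm]
        _ = g ^ p * ((1 + (πA ^ (n * p + 1) * s + πA ^ (n * p) * a ^ p)) +
              πA ^ (n * p + 1) * (t - s)) := by rw [hht]; ring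
        _ = g ^ p * ((1 + πA ^ n * a) ^ p + πA ^ (n * p + 1) * (t - s)) := by rw [← hD]
        _ = g ^ p * ((1 + πA ^ n * a) ^ p * (1 + πA ^ (n * p + 1) * e0)) := by rw [h11]
        _ = (g * (1 + πA ^ n * a)) ^ p * (1 + πA ^ (n * p + 1) * e0) := by rw [mul_pow]; ring
    have hgu' : IsUnit (g * (1 + πA ^ n * a)) := hg.mul hD1u
    by_cases he00 : e0 = 0
    · refine ⟨g * (1 + πA ^ n * a), 0, vlam, hgu', hv1, le_refl _, ?_, Or.inl rfl⟩
      rw [hfeq2, he00]; ring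
    · obtain ⟨k, e', he', hfac⟩ := WfDvdMonoid.max_power_factor he00 hπA.irreducible
      have hfeq3 : f = (g * (1 + πA ^ n * a)) ^ p * (1 + πA ^ (n * p + 1 + k) * e') := by
        rw [hfeq2, hfac, pow_add]; ring
      refine ih (g * (1 + πA ^ n * a)) e' (n * p + 1 + k) hgu' he' (by omega) ?_ hfeq3
      linarith [hfuel]

lemma aux_algebraMap_ne_zero {R A : Type*} [CommRing R] [IsDomain R] [CommRing A] [Nontrivial A]
    [Algebra R A] [Module.Flat R A] {r : R} (hr : r ≠ 0) : algebraMap R A r ≠ 0 := by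
  have hreg : IsSMulRegular R r := fun x y hxy => by
    simpa [smul_eq_mul] using mul_left_cancel₀ hr (by simpa [smul_eq_mul] using hxy)
  have hreg2 : IsSMulRegular (TensorProduct R A R) r := hreg.lTensor A
  have hreg3 : IsSMulRegular A r :=
    (Equiv.isSMulRegular_congr (e := (TensorProduct.rid R A).toEquiv)
      (r := r) (s := r) (fun x => (TensorProduct.rid R A).map_smul r x)).mp hreg2
  intro h0
  have h1 : r • (1 : A) = r • (0 : A) := by
    rw [smul_zero, ← Algebra.algebraMap_eq_smul_one, h0]
  exact one_ne_zero (hreg3 h1)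


set_option maxHeartbeats 2000000 in
set_option synthInstance.maxHeartbeats 1000000 in
lemma key_no_middle {p : ℕ} (hp : p.Prime)
    {A : Type*} [CommRing A] [IsDomain A] [UniqueFactorizationMonoid A]
    (f πA : A) (hπA : Prime πA)
    (hirr : Irreducible ((X : Polynomial (FractionRing A)) ^ p -
      C (algebraMap A (FractionRing A) f)))
    (hBdom : IsDomain
      ((integralClosure A (AdjoinRoot ((X : Polynomial (FractionRing A)) ^ p -
          C (algebraMap A (FractionRing A) f)))) ⧸
        Ideal.span {algebraMap A
          (integralClosure A (AdjoinRoot ((X : Polynomial (FractionRing A)) ^ p -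
            C (algebraMap A (FractionRing A) f)))) πA}))
    {vlam : ℕ} (hpd : πA ^ ((p - 1) * vlam) ∣ (p : A))
    (g h : A) (m : ℕ) (hg : IsUnit g) (hh : ¬ πA ∣ h)
    (hm1 : 1 ≤ m) (hmp : ¬ p ∣ m) (hmv : m < p * vlam)
    (hfeq : f = g ^ p * (1 + πA ^ m * h)) : False := by
  haveI : Fact (Irreducible ((X : Polynomial (FractionRing A)) ^ p -
      C (algebraMap A (FractionRing A) f))) := ⟨hirr⟩
  set K := FractionRing A
  set q : Polynomial K := (X : Polynomial K) ^ p - C (algebraMap A K f) with hq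
  set L := AdjoinRoot q
  set B := integralClosure A L with hB
  set πB : B := algebraMap A B πA with hπB
  set S : A →+* B := algebraMap A B with hS
  -- coercion
  have hcoe : ∀ a : A, ((algebraMap A B a : B) : L) = algebraMap A L a := fun a =>
    Subalgebra.coe_algebraMap (integralClosure A L) a
  have hinjKL : Function.Injective (algebraMap K L) := (algebraMap K L).injective
  have hinjAK : Function.Injective (algebraMap A K) := IsFractionRing.injective A K
  have hinjAL : Function.Injective (algebraMap A L) := by
    rw [IsScalarTower.algebraMap_eq A K L, RingHom.coe_comp]
    exact hinjKL.comp hinjAK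
  have hπB0 : πB ≠ 0 := by
    intro h0
    have : algebraMap A L πA = 0 := by rw [← hcoe]; rw [← hπB]; rw [h0]; simp
    exact hπA.ne_zero (hinjAL (by rw [this, map_zero]))
  have dvd_down : ∀ a : A, πB ∣ algebraMap A B a → πA ∣ a := by
    rintro a ⟨b, hb⟩
    have hbL : algebraMap A L a = algebraMap A L πA * (b : L) := by
      have := congrArg (Subtype.val) hb
      exact (show algebraMap A L a = (πB : L) * b by simpa [hcoe] using this).trans (by rw [← hcoe πA])
    have hπK0 : algebraMap A K πA ≠ 0 := by
      rw [Ne, IsFractionRing.to_map_eq_zero_iff]; exact hπA.ne_zero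
    have hπL0 : algebraMap A L πA ≠ 0 := fun h0 => hπA.ne_zero (hinjAL (by rw [h0, map_zero]))
    have hK : algebraMap K L ((algebraMap A K a) / (algebraMap A K πA)) = (b : L) := by
      rw [map_div₀, ← IsScalarTower.algebraMap_apply, ← IsScalarTower.algebraMap_apply, hbL]
      rw [mul_comm, mul_div_assoc, div_self hπL0, mul_one]
    have hint : IsIntegral A ((algebraMap A K a) / (algebraMap A K πA)) := by
      rw [← isIntegral_algHom_iff (IsScalarTower.toAlgHom A K L) hinjKL]
      show IsIntegral A (algebraMap K L _)
      rw [hK]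
      exact b.2
    obtain ⟨c, hc⟩ := IsIntegrallyClosed.isIntegral_iff.mp hint
    refine ⟨c, hinjAK ?_⟩
    rw [map_mul, hc, mul_comm, div_mul_cancel₀ _ hπK0]
  -- the root
  have hroot : (AdjoinRoot.root q) ^ p = algebraMap A L f := by
    have h0 := AdjoinRoot.eval₂_root q
    rw [hq] at h0
    simp only [eval₂_sub, eval₂_pow, eval₂_X, eval₂_C] at h0
    have : (AdjoinRoot.root q) ^ p = AdjoinRoot.of q (algebraMap A K f) := by
      rw [sub_eq_zero] at h0; exact h0
    rw [this, ← AdjoinRoot.algebraMap_eq, ← IsScalarTower.algebraMap_apply]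
  set u : A := 1 + πA ^ m * h with hu
  set a' : A := ↑hg.unit⁻¹ with ha'
  have hga' : g * a' = 1 := hg.mul_val_inv
  set yL : L := AdjoinRoot.root q * algebraMap A L a' with hyL
  have hyLp : yL ^ p = algebraMap A L u := by
    rw [hyL, mul_pow, hroot, ← map_pow, ← map_mul, hfeq]
    congr 1
    calc g ^ p * (1 + πA ^ m * h) * a' ^ p = (g * a') ^ p * (1 + πA ^ m * h) := by ring
    _ = u := by rw [hga', one_pow, one_mul, hu]
  have hyint : IsIntegral A yL := by
    refine ⟨X ^ p - C u, monic_X_pow_sub_C u hp.ne_zero, ?_⟩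
    simp only [eval₂_sub, eval₂_pow, eval₂_X, eval₂_C, hyLp, sub_self]
  set yB : B := ⟨yL, hyint⟩ with hyB
  have hyBp : yB ^ p = algebraMap A B u := by
    apply Subtype.ext
    push_cast
    exact hyLp
  -- sum identity
  have hsum : ∀ (j : ℕ) (w : B), yB = 1 + πB ^ j * w →
      ∑ k ∈ Finset.range p, πB ^ (j * (k + 1)) * w ^ (k + 1) * ((p.choose (k + 1) : ℕ) : B)
        = algebraMap A B (πA ^ m * h) := by
    intro j w hw
    have h1 : (1 + πB ^ j * w) ^ p = algebraMap A B u := by rw [← hw]; exact hyBp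
    rw [aux_one_add_pow _ hp.ne_zero] at h1
    have h2 : algebraMap A B u = 1 + algebraMap A B (πA ^ m * h) := by
      rw [hu, map_add, map_one]
    rw [h2] at h1
    have h3 := add_left_cancel h1
    rw [← h3]
    refine Finset.sum_congr rfl fun k _ => ?_
    rw [mul_pow, ← pow_mul]
  -- climbing
  haveI := hBdom
  have hmk0 : Ideal.Quotient.mk (Ideal.span {πB}) πB = 0 :=
    Ideal.Quotient.eq_zero_iff_mem.mpr (Ideal.subset_span rfl)
  have climb : ∀ j : ℕ, (∀ j' : ℕ, j' < j → j' * p < m) → j ≤ vlam →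
      ∃ w : B, yB = 1 + πB ^ j * w := by
    intro j
    induction j with
    | zero => exact fun _ _ => ⟨yB - 1, by ring⟩
    | succ j ih =>
      intro hlt hle
      obtain ⟨w, hw⟩ := ih (fun j' hj' => hlt j' (by omega)) (by omega)
      have hid := hsum j w hw
      obtain ⟨P, hP⟩ : ∃ P, p = P + 1 := Nat.exists_eq_succ_of_ne_zero hp.ne_zero
      have hrg : Finset.range p = Finset.range (P + 1) := by rw [hP]
      rw [hrg, Finset.sum_range_succ] at hid
      have hchoose : ((p.choose (P + 1) : ℕ) : B) = 1 := by
        rw [← hP, hP, Nat.choose_self, Nat.cast_one]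
      rw [hchoose, mul_one] at hid
      have hlast : πB ^ (j * (P + 1)) * w ^ (P + 1) =
          algebraMap A B (πA ^ m * h) -
            ∑ k ∈ Finset.range P, πB ^ (j * (k + 1)) * w ^ (k + 1) * ((p.choose (k + 1) : ℕ) : B) :=
        eq_sub_of_add_eq' hid
      have hpdB : πB ^ ((p - 1) * vlam) ∣ ((p : ℕ) : B) := by
        have := map_dvd (algebraMap A B) hpd
        rwa [map_pow, map_natCast] at this
      have hdvd : πB ^ (j * (P + 1) + 1) ∣ πB ^ (j * (P + 1)) * w ^ (P + 1) := by
        rw [hlast]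
        refine dvd_sub ?_ (Finset.dvd_sum fun k hk => ?_)
        · rw [map_mul, map_pow, ← hP]
          exact dvd_mul_of_dvd_left (pow_dvd_pow _ (by have := hlt j (by omega); omega)) _
        · rw [← hP]
          exact aux_term_dvd πB hp hpdB hle (by simp at hk; omega) _
      rw [← hP] at hlast
      have hdvd2 : πB ^ (j * p + 1) ∣ πB ^ (j * p) * w ^ p := by
        rw [hP]; exact hdvd
      obtain ⟨z, hz⟩ := hdvd2
      rw [pow_succ] at hz
      have hwp : w ^ p = πB * z := by
        have := hz
        rw [mul_assoc] at this
        exact mul_left_cancel₀ (pow_ne_zero _ hπB0) this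
      have hmkw : Ideal.Quotient.mk (Ideal.span {πB}) w = 0 := by
        have h4 : (Ideal.Quotient.mk (Ideal.span {πB}) w) ^ p = 0 := by
          rw [← map_pow, hwp, map_mul, hmk0, zero_mul]
        exact (pow_eq_zero_iff hp.ne_zero).mp h4
      obtain ⟨w', hw'⟩ := Ideal.mem_span_singleton.mp (Ideal.Quotient.eq_zero_iff_mem.mp hmkw)
      exact ⟨w', by rw [hw, hw', pow_succ]; ring⟩
  -- conclusion
  set j : ℕ := m / p + 1 with hj
  have hj1 : ∀ j' : ℕ, j' < j → j' * p < m := by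
    intro j' hj'
    have h5 : j' ≤ m / p := by omega
    have h6 := Nat.div_mul_le_self m p
    have h7 : j' * p ≤ m := le_trans (Nat.mul_le_mul_right p h5) h6
    rcases lt_or_eq_of_le h7 with h8 | h8
    · exact h8
    · exact absurd ⟨j', by rw [← h8]; ring⟩ hmp
  have hj2 : j ≤ vlam := by
    have := (Nat.div_lt_iff_lt_mul hp.pos).mpr (by rw [Nat.mul_comm]; exact hmv : m < vlam * p)
    omega
  obtain ⟨w, hw⟩ := climb j hj1 hj2
  have hid := hsum j w hw
  have hjp : m + 1 ≤ j * p := by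
    have := Nat.div_add_mod m p
    have := Nat.mod_lt m hp.pos
    nlinarith
  have hdvdall : πB ^ (m + 1) ∣ algebraMap A B (πA ^ m * h) := by
    rw [← hid]
    refine Finset.dvd_sum fun k hk => ?_
    simp only [Finset.mem_range] at hk
    rcases eq_or_lt_of_le (Nat.succ_le_of_lt hk) with hkp | hkp
    · -- k + 1 = p
      have hk1 : k + 1 = p := hkp
      rw [hk1]
      exact dvd_mul_of_dvd_left (dvd_mul_of_dvd_left (pow_dvd_pow _ hjp) _) _
    · -- k + 1 < p
      have hkp' : k + 1 < p := hkp
      have hpdB : πB ^ ((p - 1) * vlam) ∣ ((p : ℕ) : B) := by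
        have := map_dvd (algebraMap A B) hpd
        rwa [map_pow, map_natCast] at this
      have h1 : πB ^ ((p - 1) * vlam) ∣ ((p.choose (k + 1) : ℕ) : B) :=
        aux_choose_dvd hp hpdB (Nat.succ_ne_zero k) hkp'
      have h2 : πB ^ (j * (k + 1) + (p - 1) * vlam) ∣
          πB ^ (j * (k + 1)) * w ^ (k + 1) * ((p.choose (k + 1) : ℕ) : B) := by
        rw [pow_add]
        exact mul_dvd_mul (dvd_mul_right _ _) h1
      refine dvd_trans (pow_dvd_pow _ ?_) h2
      obtain ⟨P, hP⟩ : ∃ P, p = P + 1 := Nat.exists_eq_succ_of_ne_zero hp.ne_zero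
      have hP1 : 1 ≤ P := by have := hp.two_le; omega
      have e1 : P * j ≤ (p - 1) * vlam := by
        rw [hP]; simp only [Nat.succ_sub_one]; exact Nat.mul_le_mul_left P hj2
      have e2 : j ≤ j * (k + 1) := Nat.le_mul_of_pos_right j (by omega)
      have e3 : j * p = j * P + j := by rw [hP]; ring
      nlinarith [hjp]
  have hdvdh : πB ∣ algebraMap A B h := by
    rw [map_mul, map_pow] at hdvdall
    obtain ⟨z, hz⟩ := hdvdall
    refine ⟨z, mul_left_cancel₀ (pow_ne_zero m hπB0) ?_⟩
    rw [hz, pow_succ]; ring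
  exact hh (dvd_down h hdvdh)

set_option maxHeartbeats 2000000 in
set_option synthInstance.maxHeartbeats 1000000 in
/-- additive/étale normal form: with `L = Frac(A)[X]/(X^p − f)` and `B` the
integral closure of `A` in `L`, if `B/πB` is a domain and the image of the unit `f` in
`A/πA` is a `p`-th power, then `f = g^p·(1 + π^{pn} h)` with `g` a unit, `0 < n ≤ v_K(λ)`,
and either `n = v_K(λ)` or the image of `h` in `A/πA` is not a `p`-th power. -/
theorem stmt_10 {p : ℕ} (hp : p.Prime)
    (R : Type*) [CommRing R] [IsDomain R] [IsDiscreteValuationRing R]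
    [IsAdicComplete (IsLocalRing.maximalIdeal R) R]
    [CharZero (FractionRing R)]
    [IsAlgClosed (IsLocalRing.ResidueField R)] [CharP (IsLocalRing.ResidueField R) p]
    (π : R) (hπ : Irreducible π)
    (ζ : FractionRing R) (hζ : IsPrimitiveRoot ζ p)
    (lam : R) (hlam : algebraMap R (FractionRing R) lam = ζ - 1)
    (vlam : ℕ) (hvlam : Associated (π ^ vlam) lam)
    (A : Type*) [CommRing A] [IsDomain A] [UniqueFactorizationMonoid A]
    [Algebra R A] [Module.Flat R A]
    [IsAdicComplete (Ideal.span {algebraMap R A π}) A]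
    [IsDomain (A ⧸ Ideal.span {algebraMap R A π})]
    (f : A) (hf : IsUnit f)
    (hirr : Irreducible ((Polynomial.X : Polynomial (FractionRing A)) ^ p -
      Polynomial.C (algebraMap A (FractionRing A) f)))
    (hBdom : IsDomain
      ((integralClosure A (AdjoinRoot ((Polynomial.X : Polynomial (FractionRing A)) ^ p -
          Polynomial.C (algebraMap A (FractionRing A) f)))) ⧸
        Ideal.span {algebraMap A
          (integralClosure A (AdjoinRoot ((Polynomial.X : Polynomial (FractionRing A)) ^ p -
            Polynomial.C (algebraMap A (FractionRing A) f))))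
          (algebraMap R A π)}))
    (hfbar : ∃ c : A ⧸ Ideal.span {algebraMap R A π},
      c ^ p = Ideal.Quotient.mk (Ideal.span {algebraMap R A π}) f) :
    ∃ (g h : A) (n : ℕ), IsUnit g ∧ 0 < n ∧ n ≤ vlam ∧
      f = g ^ p * (1 + (algebraMap R A π) ^ (p * n) * h) ∧
      (n = vlam ∨ ¬ ∃ c : A ⧸ Ideal.span {algebraMap R A π},
        c ^ p = Ideal.Quotient.mk (Ideal.span {algebraMap R A π}) h) := by
  -- R-side: lam ^ (p-1) is associated to p, lam is not a unit
  have hinjR : Function.Injective (algebraMap R (FractionRing R)) := IsFractionRing.injective R _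
  have hmapl : algebraMap R (FractionRing R) (1 + lam) = ζ := by
    rw [map_add, map_one, hlam]; ring
  have hzp : (1 + lam) ^ p = 1 := hinjR (by rw [map_pow, hmapl, hζ.pow_eq_one, map_one])
  have hlam0 : lam ≠ 0 := by
    intro h0
    apply hζ.ne_one hp.one_lt
    have h1 : ζ - 1 = 0 := by rw [← hlam, h0, map_zero]
    rw [sub_eq_zero] at h1; exact h1
  have hexp := aux_one_add_pow lam hp.ne_zero
  rw [hzp] at hexp
  have hsum0 : ∑ k ∈ Finset.range p, lam ^ (k + 1) * ((p.choose (k + 1) : ℕ) : R) = 0 :=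
    (left_eq_add.mp hexp)
  have hfacz : lam * ∑ k ∈ Finset.range p, lam ^ k * ((p.choose (k + 1) : ℕ) : R) = 0 := by
    rw [Finset.mul_sum, ← hsum0]
    exact Finset.sum_congr rfl fun k _ => by ring
  have hsum1 : ∑ k ∈ Finset.range p, lam ^ k * ((p.choose (k + 1) : ℕ) : R) = 0 :=
    (mul_eq_zero.mp hfacz).resolve_left hlam0
  obtain ⟨P, hP⟩ : ∃ P, p = P + 1 := Nat.exists_eq_succ_of_ne_zero hp.ne_zero
  have hP1 : 1 ≤ P := by have := hp.two_le; omega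
  obtain ⟨P2, hP2⟩ : ∃ P2, P = P2 + 1 := Nat.exists_eq_succ_of_ne_zero (by omega)
  have hrg : Finset.range p = Finset.range (P + 1) := by rw [hP]
  rw [hrg, Finset.sum_range_succ] at hsum1
  have hch : ((p.choose (P + 1) : ℕ) : R) = 1 := by rw [← hP, hP, Nat.choose_self, Nat.cast_one]
  rw [hch, mul_one] at hsum1
  have hrg2 : Finset.range P = Finset.range (P2 + 1) := by rw [hP2]
  rw [hrg2, Finset.sum_range_succ'] at hsum1
  have hmid : ((p : ℕ) : R) * lam ∣
      ∑ k ∈ Finset.range P2, lam ^ (k + 1) * ((p.choose (k + 1 + 1) : ℕ) : R) := by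
    refine Finset.dvd_sum fun k hk => ?_
    simp only [Finset.mem_range] at hk
    obtain ⟨cc, hcc⟩ := hp.dvd_choose_self (k := k + 2) (by omega) (by omega)
    rw [show k + 1 + 1 = k + 2 from rfl, hcc]
    push_cast
    exact ⟨lam ^ k * (cc : R), by ring⟩
  obtain ⟨s, hs⟩ := hmid
  rw [hs] at hsum1
  simp only [pow_zero, one_mul, zero_add, Nat.choose_one_right] at hsum1
  have hkey : ((p : ℕ) : R) * (1 + lam * s) = -(lam ^ P) := by linear_combination hsum1
  have hpnon : ¬ IsUnit ((p : ℕ) : R) := by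
    intro hu
    have h0 : ((p : ℕ) : IsLocalRing.ResidueField R) = 0 := CharP.cast_eq_zero _ p
    have h1 := hu.map (IsLocalRing.residue R)
    rw [map_natCast, h0] at h1
    exact not_isUnit_zero h1
  have hlamnon : ¬ IsUnit lam := by
    intro hu
    exact hpnon (isUnit_of_dvd_unit ⟨1 + lam * s, hkey.symm⟩ ((hu.pow P).neg))
  have hUu : IsUnit (1 + lam * s) := by
    have hmem : -(lam * s) ∈ nonunits R := by
      have h2 : lam ∈ IsLocalRing.maximalIdeal R := (IsLocalRing.mem_maximalIdeal lam).mpr hlamnon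
      have h3 : -(lam * s) ∈ IsLocalRing.maximalIdeal R :=
        neg_mem (Ideal.mul_mem_right s _ h2)
      exact (IsLocalRing.mem_maximalIdeal _).mp h3
    have h4 := IsLocalRing.isUnit_one_sub_self_of_mem_nonunits _ hmem
    rwa [sub_neg_eq_add] at h4
  have hlamdvd : lam ^ P ∣ ((p : ℕ) : R) := by
    refine ⟨-(↑hUu.unit⁻¹ : R), ?_⟩
    have h4 : ((p : ℕ) : R) * ((1 + lam * s) * ↑hUu.unit⁻¹) = -(lam ^ P) * ↑hUu.unit⁻¹ := by
      rw [← mul_assoc, hkey]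
    rw [hUu.mul_val_inv, mul_one] at h4
    rw [h4]; ring
  have hv1 : 1 ≤ vlam := by
    rcases Nat.eq_zero_or_pos vlam with h0 | h0
    · exfalso
      apply hlamnon
      rw [h0, pow_zero] at hvlam
      exact associated_one_iff_isUnit.mp hvlam.symm
    · exact h0
  have hπdvd : π ^ ((p - 1) * vlam) ∣ ((p : ℕ) : R) := by
    have h5 : Associated (π ^ (vlam * P)) (lam ^ P) := by
      have h6 := hvlam.pow_pow (n := P)
      rwa [← pow_mul] at h6
    have h6 : π ^ (vlam * P) ∣ ((p : ℕ) : R) := h5.dvd.trans hlamdvd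
    have h7 : (p - 1) * vlam = vlam * P := by
      rw [hP]; simp only [Nat.succ_sub_one]; ring
    rwa [h7]
  -- A-side setup
  have hjac : Ideal.span {algebraMap R A π} ≤ Ideal.jacobson ⊥ := IsAdicComplete.le_jacobson_bot _
  have hπA0 : algebraMap R A π ≠ 0 := aux_algebraMap_ne_zero hπ.ne_zero
  have hπAp : Prime (algebraMap R A π) :=
    (Ideal.span_singleton_prime hπA0).mp
      ((Ideal.Quotient.isDomain_iff_prime (Ideal.span {algebraMap R A π})).mp inferInstance)
  have hpdA : (algebraMap R A π) ^ ((p - 1) * vlam) ∣ ((p : ℕ) : A) := by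
    have h8 := map_dvd (algebraMap R A) hπdvd
    rwa [map_pow, map_natCast] at h8
  have keyfun : ∀ g h : A, ∀ m : ℕ, IsUnit g → ¬ algebraMap R A π ∣ h → 1 ≤ m → ¬ p ∣ m →
      m < p * vlam → f = g ^ p * (1 + (algebraMap R A π) ^ m * h) → False :=
    fun g h m hg hh hm1 hmp hmv he =>
      key_no_middle hp f (algebraMap R A π) hπAp hirr hBdom hpdA g h m hg hh hm1 hmp hmv he
  -- initial step
  obtain ⟨c, hc⟩ := hfbar
  obtain ⟨a, ha⟩ := Ideal.Quotient.mk_surjective c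
  have hamk : IsUnit (Ideal.Quotient.mk (Ideal.span {algebraMap R A π}) a) := by
    have hfu : IsUnit (Ideal.Quotient.mk (Ideal.span {algebraMap R A π}) f) := hf.map _
    refine isUnit_of_dvd_unit ?_ hfu
    rw [← hc, ← ha]
    exact dvd_pow_self _ hp.ne_zero
  have hau : IsUnit a := aux_isUnit_of_mk hjac hamk
  have hdvd : (algebraMap R A π) ∣ f - a ^ p := by
    rw [← Ideal.mem_span_singleton, ← Ideal.Quotient.eq_zero_iff_mem, map_sub, map_pow, ha,
      hc, sub_self]
  obtain ⟨t0, ht0⟩ := hdvd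
  have hinv : a ^ p * (↑hau.unit⁻¹ : A) ^ p = 1 := by
    rw [← mul_pow, hau.mul_val_inv, one_pow]
  have hfeq0 : f = a ^ p * (1 + (algebraMap R A π) * ((↑hau.unit⁻¹ : A) ^ p * t0)) := by
    have hf2 : f = algebraMap R A π * t0 + a ^ p := sub_eq_iff_eq_add.mp ht0
    calc f = algebraMap R A π * t0 + a ^ p := hf2
      _ = a ^ p + (a ^ p * (↑hau.unit⁻¹ : A) ^ p) * (algebraMap R A π * t0) := by
          rw [hinv]; ring
      _ = a ^ p * (1 + (algebraMap R A π) * ((↑hau.unit⁻¹ : A) ^ p * t0)) := by ring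
  by_cases h00 : (↑hau.unit⁻¹ : A) ^ p * t0 = 0
  · exact ⟨a, 0, vlam, hau, hv1, le_refl _, by rw [hfeq0, h00]; ring, Or.inl rfl⟩
  · obtain ⟨k, e', he', hfac⟩ := WfDvdMonoid.max_power_factor h00 hπAp.irreducible
    have hfeq1 : f = a ^ p * (1 + (algebraMap R A π) ^ (k + 1) * e') := by
      rw [hfeq0, hfac, pow_succ]; ring
    exact outer_normal_form hp (algebraMap R A π) hπAp hjac hv1 hpdA f keyfun
      (p * vlam) a e' (k + 1) hau he' (by omega) (Nat.le_add_left _ _) hfeq1
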